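/- arXiv:1801.01714 — 6 statements merged into one kernel-verified Lean document; each statement's English description precedes it below -/
import Mathlib

section
/- Let P ∈ ℂ[X,Y] be a nonzero homogeneous polynomial of degree n ≥ 1, let ξ = (x₀,y₀) ∈ ℂ² be nonzero, let ℓ_ξ = y₀X − x₀Y, let D_ξ = x₀∂/∂X + y₀∂/∂Y, and let 1 ≤ k ≤ n. Then ℓ_ξᵏ divides P while ℓ_ξ^{k+1} does not (i.e. ξ is exactly a k-fold principal spinor of P) if and only if D_ξ^{n−k+1}P = 0 and D_ξ^{n−k}P ≠ 0. -/
open MvPolynomial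

/-- The directional derivative `D_ξ = x₀ ∂/∂X + y₀ ∂/∂Y` on binary forms. -/
noncomputable def dirDeriv (x₀ y₀ : ℂ) (P : MvPolynomial (Fin 2) ℂ) :
    MvPolynomial (Fin 2) ℂ :=
  x₀ • pderiv (0 : Fin 2) P + y₀ • pderiv (1 : Fin 2) P

namespace SpinorAux

lemma dirDeriv_eq (x₀ y₀ : ℂ) (P : MvPolynomial (Fin 2) ℂ) :
    dirDeriv x₀ y₀ P = C x₀ * pderiv 0 P + C y₀ * pderiv 1 P := by
  rw [dirDeriv, smul_eq_C_mul, smul_eq_C_mul]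

lemma dirDeriv_add (x₀ y₀ : ℂ) (p q : MvPolynomial (Fin 2) ℂ) :
    dirDeriv x₀ y₀ (p + q) = dirDeriv x₀ y₀ p + dirDeriv x₀ y₀ q := by
  simp only [dirDeriv_eq, map_add]; ring

lemma dirDeriv_mul (x₀ y₀ : ℂ) (p q : MvPolynomial (Fin 2) ℂ) :
    dirDeriv x₀ y₀ (p * q) = dirDeriv x₀ y₀ p * q + p * dirDeriv x₀ y₀ q := by
  simp only [dirDeriv_eq, pderiv_mul]; ring

lemma coeff_pderiv (i : Fin 2) (m : Fin 2 →₀ ℕ) (P : MvPolynomial (Fin 2) ℂ) :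
    coeff m (pderiv i P) = ((m i : ℂ) + 1) * coeff (m + Finsupp.single i 1) P := by
  classical
  induction P using MvPolynomial.induction_on' with
  | monomial s a =>
      rw [pderiv_monomial]
      by_cases h : s = m + Finsupp.single i 1
      · subst h
        have h1 : (m + Finsupp.single i 1) - Finsupp.single i 1 = m := by
          ext t; simp [Finsupp.tsub_apply, Finsupp.add_apply]
        rw [h1, coeff_monomial, coeff_monomial, if_pos rfl, if_pos rfl]
        have h2 : (m + Finsupp.single i 1 : Fin 2 →₀ ℕ) i = m i + 1 := by
          rw [Finsupp.add_apply, Finsupp.single_eq_same]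
        rw [h2]; push_cast; ring
      · by_cases h0 : s i = 0
        · simp [coeff_monomial, h0, h]
        · have hs : s - Finsupp.single i 1 ≠ m := by
            intro hm
            apply h
            rw [← hm, tsub_add_cancel_of_le]
            rw [Finsupp.single_le_iff]; omega
          rw [coeff_monomial, coeff_monomial, if_neg hs, if_neg h, mul_zero]
  | add p q hp hq => simp [hp, hq, mul_add]

lemma iterate_pderiv_eq_zero_iff (i : Fin 2) (j : ℕ) (P : MvPolynomial (Fin 2) ℂ) :
    (pderiv i)^[j] P = 0 ↔ ∀ m ∈ P.support, m i < j := by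
  induction j generalizing P with
  | zero =>
      simp only [Function.iterate_zero, id_eq, Nat.not_lt_zero]
      constructor
      · rintro rfl; simp
      · intro h
        rw [← support_eq_empty]
        exact Finset.eq_empty_of_forall_notMem fun m hm => h m hm
  | succ j ih =>
      rw [Function.iterate_succ_apply, ih]
      constructor
      · intro h m hm
        rcases Nat.eq_zero_or_pos (m i) with h0 | h0
        · omega
        · have hm' : (m - Finsupp.single i 1) + Finsupp.single i 1 = m :=
            tsub_add_cancel_of_le (by rw [Finsupp.single_le_iff]; omega)
          have hmem : (m - Finsupp.single i 1) ∈ (pderiv i P).support := by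
            rw [mem_support_iff, coeff_pderiv, hm']
            exact mul_ne_zero
              (Nat.cast_add_one_ne_zero _)
              (mem_support_iff.mp hm)
          have h1 := h _ hmem
          have hi : (m - Finsupp.single i 1 : Fin 2 →₀ ℕ) i = m i - 1 := by
            rw [Finsupp.tsub_apply, Finsupp.single_eq_same]
          omega
      · intro h m hm
        rw [mem_support_iff, coeff_pderiv] at hm
        have hc : coeff (m + Finsupp.single i 1) P ≠ 0 := fun hc => hm (by rw [hc, mul_zero])
        have h1 := h _ (mem_support_iff.mpr hc)
        have h2 : (m + Finsupp.single i 1 : Fin 2 →₀ ℕ) i = m i + 1 := by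
          rw [Finsupp.add_apply, Finsupp.single_eq_same]
        omega

lemma X_pow_dvd_iff' (i : Fin 2) (k : ℕ) (P : MvPolynomial (Fin 2) ℂ) :
    (X i : MvPolynomial (Fin 2) ℂ) ^ k ∣ P ↔ ∀ m ∈ P.support, k ≤ m i := by
  rw [X_pow_eq_monomial, monomial_one_dvd_iff_modMonomial_eq_zero]
  constructor
  · intro h m hm
    by_contra hk
    push_neg at hk
    have hle : ¬ Finsupp.single i k ≤ m := by
      rw [Finsupp.single_le_iff]; omega
    have := coeff_modMonomial_of_not_le (s' := m) (s := Finsupp.single i k) P hle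
    rw [h] at this
    exact (mem_support_iff.mp hm) (by simpa using this.symm)
  · intro h
    ext m
    by_cases hle : Finsupp.single i k ≤ m
    · simp [coeff_modMonomial_of_le P hle]
    · rw [coeff_modMonomial_of_not_le P hle, coeff_zero]
      by_contra hc
      apply hle
      rw [Finsupp.single_le_iff]
      exact h m (mem_support_iff.mpr hc)

lemma reduced (n k : ℕ) (hkn : k ≤ n) (R : MvPolynomial (Fin 2) ℂ)
    (hhom : R.IsHomogeneous n) :
    ((X 1 : MvPolynomial (Fin 2) ℂ) ^ k ∣ R ∧
      ¬ (X 1 : MvPolynomial (Fin 2) ℂ) ^ (k + 1) ∣ R) ↔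
    ((pderiv (0 : Fin 2))^[n - k + 1] R = 0 ∧ (pderiv (0 : Fin 2))^[n - k] R ≠ 0) := by
  have hsum : ∀ m ∈ R.support, m 0 + m 1 = n := by
    intro m hm
    have hd : m.degree = n := by
      by_contra h
      exact (mem_support_iff.mp hm) (hhom.coeff_eq_zero h)
    have : m.degree = ∑ i : Fin 2, m i :=
      Finset.sum_subset (Finset.subset_univ _)
        (fun i _ hi => Finsupp.notMem_support_iff.mp hi)
    rw [this, Fin.sum_univ_two] at hd
    exact hd
  have h1 : (X 1 : MvPolynomial (Fin 2) ℂ) ^ k ∣ R ↔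
      (pderiv (0 : Fin 2))^[n - k + 1] R = 0 := by
    rw [X_pow_dvd_iff', iterate_pderiv_eq_zero_iff]
    constructor <;> intro h m hm <;> have h3 := hsum m hm <;> have h4 := h m hm <;> omega
  have h2 : (X 1 : MvPolynomial (Fin 2) ℂ) ^ (k + 1) ∣ R ↔
      (pderiv (0 : Fin 2))^[n - k] R = 0 := by
    rw [X_pow_dvd_iff', iterate_pderiv_eq_zero_iff]
    constructor <;> intro h m hm <;> have h3 := hsum m hm <;> have h4 := h m hm <;> omega
  exact and_congr h1 (not_congr h2)

end SpinorAux

open SpinorAux in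
/-- `ξ = (x₀,y₀)` is exactly a `k`-fold principal spinor of the nonzero homogeneous
binary form `P` of degree `n` (i.e. `ℓ_ξᵏ ∣ P` and `ℓ_ξ^(k+1) ∤ P`, where
`ℓ_ξ = y₀X − x₀Y`) if and only if `D_ξ^(n−k+1) P = 0` and `D_ξ^(n−k) P ≠ 0`. -/
theorem exactly_k_fold_principal_spinor_iff
    (n k : ℕ) (hk1 : 1 ≤ k) (hkn : k ≤ n)
    (P : MvPolynomial (Fin 2) ℂ) (hP : P ≠ 0) (hhom : P.IsHomogeneous n)
    (x₀ y₀ : ℂ) (hξ : ¬(x₀ = 0 ∧ y₀ = 0)) :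
    ((C y₀ * X 0 - C x₀ * X 1) ^ k ∣ P ∧
      ¬ (C y₀ * X 0 - C x₀ * X 1) ^ (k + 1) ∣ P) ↔
    ((dirDeriv x₀ y₀)^[n - k + 1] P = 0 ∧ (dirDeriv x₀ y₀)^[n - k] P ≠ 0) := by
  obtain ⟨a, b, hdet⟩ : ∃ a b : ℂ, x₀ * b - a * y₀ = 1 := by
    rcases not_and_or.mp hξ with hx | hy
    · exact ⟨0, x₀⁻¹, by field_simp; ring⟩
    · exact ⟨-y₀⁻¹, 0, by field_simp; ring⟩
  set g : Fin 2 → MvPolynomial (Fin 2) ℂ :=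
    ![C x₀ * X 0 + C a * X 1, C y₀ * X 0 + C b * X 1] with hg
  set g' : Fin 2 → MvPolynomial (Fin 2) ℂ :=
    ![C b * X 0 - C a * X 1, - C y₀ * X 0 + C x₀ * X 1] with hg'
  have hC1 : (C x₀ * C b - C a * C y₀ : MvPolynomial (Fin 2) ℂ) = 1 := by
    rw [← C_mul, ← C_mul, ← C_sub, hdet, C_1]
  have hginv : ∀ Q : MvPolynomial (Fin 2) ℂ, aeval g' (aeval g Q) = Q := by
    have hcomp : (aeval g').comp (aeval g) = AlgHom.id ℂ (MvPolynomial (Fin 2) ℂ) := by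
      apply MvPolynomial.algHom_ext
      intro i
      fin_cases i <;>
        simp only [AlgHom.comp_apply, AlgHom.id_apply, aeval_X, hg, hg', Fin.zero_eta,
          Fin.mk_one, Fin.isValue, Matrix.cons_val_zero, Matrix.cons_val_one,
          Matrix.head_cons, map_add, map_sub, map_mul, map_neg, aeval_C, algebraMap_eq]
      · linear_combination (X 0 : MvPolynomial (Fin 2) ℂ) * hC1
      · linear_combination (X 1 : MvPolynomial (Fin 2) ℂ) * hC1
    intro Q
    exact congrArg (fun f => f Q) (congrArg DFunLike.coe hcomp)
  have hinj : Function.Injective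
      (⇑(aeval (R := ℂ) g) : MvPolynomial (Fin 2) ℂ → MvPolynomial (Fin 2) ℂ) :=
    Function.LeftInverse.injective
      (show Function.LeftInverse (⇑(aeval (R := ℂ) g')) (⇑(aeval (R := ℂ) g)) from hginv)
  have hXi : ∀ i : Fin 2, pderiv 0 (aeval g (X i : MvPolynomial (Fin 2) ℂ)) =
      aeval g (dirDeriv x₀ y₀ (X i)) := by
    intro i
    fin_cases i <;>
      simp [dirDeriv_eq, hg, pderiv_X, Pi.single_apply, algebraMap_eq]
  have hchainX : ∀ Q : MvPolynomial (Fin 2) ℂ,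
      pderiv 0 (aeval g Q) = aeval g (dirDeriv x₀ y₀ Q) := by
    intro Q
    induction Q using MvPolynomial.induction_on with
    | C c => simp [dirDeriv_eq, algebraMap_eq]
    | add p q hp hq => rw [map_add, map_add, dirDeriv_add, map_add, hp, hq]
    | mul_X p i hp =>
        rw [map_mul, pderiv_mul, hp, dirDeriv_mul, map_add, map_mul, map_mul, hXi i]
  have hchain : ∀ j (Q : MvPolynomial (Fin 2) ℂ),
      (pderiv (0 : Fin 2))^[j] (aeval g Q) = aeval g ((dirDeriv x₀ y₀)^[j] Q) := by
    intro j
    induction j with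
    | zero => intro Q; simp
    | succ j ih =>
        intro Q
        rw [Function.iterate_succ_apply', Function.iterate_succ_apply', ih, hchainX]
  have hiterzero : ∀ j, ((dirDeriv x₀ y₀)^[j] P = 0 ↔
      (pderiv (0 : Fin 2))^[j] (aeval g P) = 0) := by
    intro j
    rw [hchain]
    constructor
    · intro h; rw [h, map_zero]
    · intro h
      exact hinj (by simpa using h)
  have hhom' : (aeval g P).IsHomogeneous n := by
    have hgi : ∀ i : Fin 2, (g i).IsHomogeneous 1 := by
      intro i
      fin_cases i <;>
        exact ((isHomogeneous_X _ _).C_mul _).add ((isHomogeneous_X _ _).C_mul _)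
    simpa using hhom.aeval g hgi
  have hl : aeval g (C y₀ * X 0 - C x₀ * X 1) = - X 1 := by
    simp only [map_sub, map_mul, aeval_X, aeval_C, algebraMap_eq, hg,
      Matrix.cons_val_zero, Matrix.cons_val_one, Matrix.head_cons]
    linear_combination -(X 1 : MvPolynomial (Fin 2) ℂ) * hC1
  have hdvd : ∀ j, ((C y₀ * X 0 - C x₀ * X 1) ^ j ∣ P ↔
      (X 1 : MvPolynomial (Fin 2) ℂ) ^ j ∣ aeval g P) := by
    intro j
    constructor
    · intro h
      have h2 : (- X 1 : MvPolynomial (Fin 2) ℂ) ^ j ∣ aeval g P := by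
        rw [← hl, ← map_pow]
        exact map_dvd _ h
      rw [neg_pow] at h2
      exact (dvd_mul_left _ _).trans h2
    · intro h
      have h2 : (aeval g' (X 1 : MvPolynomial (Fin 2) ℂ)) ^ j ∣ aeval g' (aeval g P) := by
        rw [← map_pow]
        exact map_dvd _ h
      rw [hginv] at h2
      have hx1 : aeval g' (X 1 : MvPolynomial (Fin 2) ℂ)
          = - (C y₀ * X 0 - C x₀ * X 1) := by
        simp [hg']
        ring
      rw [hx1, neg_pow] at h2
      exact (dvd_mul_left _ _).trans h2
  rw [hdvd k, hdvd (k + 1), reduced n k hkn (aeval g P) hhom']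
  exact and_congr (hiterzero (n - k + 1)).symm (not_congr (hiterzero (n - k))).symm
end

section
/- Let (o,ι) be a spin basis of ℂ² with associated null tetrad L = ooᴴ, N = ιιᴴ, M = oιᴴ, M̄ = ιoᴴ, and g(X,Y) = tr(X)tr(Y) − tr(XY). Then for all 2×2 complex matrices X and Y: g(X,Y) = g(L,X)g(N,Y) + g(N,X)g(L,Y) − g(M,X)g(M̄,Y) − g(M̄,X)g(M,Y). (This is the null-tetrad decomposition of the metric, g_{ab} = 2l_{(a}n_{b)} − 2m_{(a}m̄_{b)}.) -/
open Matrix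

/-- Null-tetrad decomposition of the Minkowski metric,
`g_{ab} = 2l_{(a}n_{b)} − 2m_{(a}m̄_{b)}`: for a spin basis `(o,ι)` with
associated tetrad `L = ooᴴ`, `N = ιιᴴ`, `M = oιᴴ`, `M̄ = ιoᴴ` and
`g(X,Y) = tr(X)tr(Y) − tr(XY)`, one has, for all 2×2 complex matrices `X, Y`,
`g(X,Y) = g(L,X)g(N,Y) + g(N,X)g(L,Y) − g(M,X)g(M̄,Y) − g(M̄,X)g(M,Y)`. -/
theorem null_tetrad_decomposition_of_metric
    (o ι : Fin 2 → ℂ) (hbasis : o 0 * ι 1 - o 1 * ι 0 = 1) :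
    let L := Matrix.vecMulVec o (star o)
    let N := Matrix.vecMulVec ι (star ι)
    let M := Matrix.vecMulVec o (star ι)
    let M' := Matrix.vecMulVec ι (star o)
    let g := fun X Y : Matrix (Fin 2) (Fin 2) ℂ =>
      X.trace * Y.trace - (X * Y).trace
    ∀ X Y : Matrix (Fin 2) (Fin 2) ℂ,
      g X Y = g L X * g N Y + g N X * g L Y - g M X * g M' Y - g M' X * g M Y := by
  intro L N M M' g X Y
  have hconj : star (o 0) * star (ι 1) - star (o 1) * star (ι 0) = 1 := by
    calc star (o 0) * star (ι 1) - star (o 1) * star (ι 0)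
        = star (o 0 * ι 1 - o 1 * ι 0) := by
          simp [star_sub, star_mul']
      _ = 1 := by rw [hbasis, star_one]
  simp only [L, N, M, M', g, Matrix.trace_fin_two, Matrix.mul_apply,
    Matrix.vecMulVec_apply, Fin.sum_univ_two, Pi.star_apply]
  linear_combination
    (-((X 0 0 + X 1 1) * (Y 0 0 + Y 1 1)
      - (X 0 0 * Y 0 0 + X 0 1 * Y 1 0 + X 1 0 * Y 0 1 + X 1 1 * Y 1 1)) *
      ((star (o 0) * star (ι 1) - star (o 1) * star (ι 0)) * hbasis + hconj))
end

section
/- Let C = {x ∈ ℝ⁴ : x₀ > ‖(x₁,x₂,x₃)‖} be the open future cone and let S ⊆ ℝ⁴ be nonempty with F := S + C ≠ ℝ⁴ (F is the chronological future I⁺[S] of S in Minkowski space-time). Then there is a unique function h : ℝ³ → ℝ, Lipschitz with constant 1, such that the topological frontier of F equals the graph {x ∈ ℝ⁴ : x₀ = h(x₁,x₂,x₃)}. In particular the achronal boundary ∂F is achronal (no two of its points differ by an element of C) and is an embedded 3-dimensional C⁰ topological submanifold of ℝ⁴, homeomorphic to ℝ³. -/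
open scoped Pointwise

/-- The Euclidean norm of the spatial part of a 4-vector. -/
noncomputable def spatialNorm (x : Fin 4 → ℝ) : ℝ :=
  Real.sqrt ((x 1) ^ 2 + (x 2) ^ 2 + (x 3) ^ 2)

/-- The spatial part of a 4-vector, as a point of Euclidean 3-space. -/
noncomputable def tailE (x : Fin 4 → ℝ) : EuclideanSpace ℝ (Fin 3) :=
  WithLp.toLp 2 (fun i : Fin 3 => x i.succ)

/-- Insert a time coordinate in front of a spatial point. -/
noncomputable def consT (t : ℝ) (p : EuclideanSpace ℝ (Fin 3)) : Fin 4 → ℝ :=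
  Fin.cons t p

@[simp] lemma consT_zero (t : ℝ) (p : EuclideanSpace ℝ (Fin 3)) : consT t p 0 = t := rfl

@[simp] lemma consT_succ (t : ℝ) (p : EuclideanSpace ℝ (Fin 3)) (j : Fin 3) :
    consT t p j.succ = p j := by
  simp [consT, Fin.cons_succ]

lemma spatialNorm_eq (x : Fin 4 → ℝ) : spatialNorm x = ‖tailE x‖ := by
  rw [EuclideanSpace.norm_eq]
  simp only [tailE, Real.norm_eq_abs, sq_abs, Fin.sum_univ_three]
  rfl

lemma tailE_sub (x y : Fin 4 → ℝ) : tailE (x - y) = tailE x - tailE y := by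
  ext i; simp [tailE]

lemma tailE_consT (t : ℝ) (p : EuclideanSpace ℝ (Fin 3)) :
    tailE (consT t p) = p := by
  ext i
  simp [tailE]

lemma spatialNorm_consT (t : ℝ) (p : EuclideanSpace ℝ (Fin 3)) :
    spatialNorm (consT t p) = ‖p‖ := by
  rw [spatialNorm_eq, tailE_consT]

lemma consT_self_tailE (x : Fin 4 → ℝ) : consT (x 0) (tailE x) = x :=
  Fin.cons_self_tail x

lemma tailE_continuous : Continuous tailE :=
  (PiLp.continuous_toLp (p := 2) (β := fun _ : Fin 3 => ℝ)).comp
    (continuous_pi fun _ => continuous_apply _)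

/-- The open future cone. -/
def cone : Set (Fin 4 → ℝ) := {x | spatialNorm x < x 0}

lemma isOpen_cone : IsOpen cone := by
  have h1 : Continuous spatialNorm := by
    have h2 : Continuous fun x => ‖tailE x‖ := continuous_norm.comp tailE_continuous
    have h3 : spatialNorm = fun x => ‖tailE x‖ := funext spatialNorm_eq
    rw [h3]; exact h2
  exact isOpen_lt h1 (continuous_apply 0)

lemma cone_add {a b : Fin 4 → ℝ} (ha : a ∈ cone) (hb : b ∈ cone) : a + b ∈ cone := by
  have h1 : spatialNorm (a + b) ≤ spatialNorm a + spatialNorm b := by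
    rw [spatialNorm_eq, spatialNorm_eq, spatialNorm_eq]
    have : tailE (a + b) = tailE a + tailE b := by
      ext i; simp [tailE]
    rw [this]; exact norm_add_le _ _
  have h0 : (a + b) 0 = a 0 + b 0 := rfl
  simp only [cone, Set.mem_setOf_eq] at ha hb ⊢
  linarith

lemma futureAdd {S : Set (Fin 4 → ℝ)} {x c : Fin 4 → ℝ}
    (hx : x ∈ S + cone) (hc : c ∈ cone) : x + c ∈ S + cone := by
  rw [Set.mem_add] at hx ⊢
  obtain ⟨s, hs, c', hc', rfl⟩ := hx
  exact ⟨s, hs, c' + c, cone_add hc' hc, (add_assoc s c' c).symm⟩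

/-- The boundary function: infimum of times at which a given spatial point
lies in the chronological future of `S`. -/
noncomputable def bfun (S : Set (Fin 4 → ℝ)) : EuclideanSpace ℝ (Fin 3) → ℝ :=
  fun p => sInf {t : ℝ | consT t p ∈ S + cone}

section Main

variable {S : Set (Fin 4 → ℝ)}

lemma T_nonempty (hS : S.Nonempty) (p : EuclideanSpace ℝ (Fin 3)) :
    ∃ t, consT t p ∈ S + cone := by
  obtain ⟨s, hs⟩ := hS
  set r : ℝ := ‖p - tailE s‖ with hr
  refine ⟨s 0 + r + 1, ?_⟩
  rw [Set.mem_add]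
  refine ⟨s, hs, consT (s 0 + r + 1) p - s, ?_, by ring⟩
  have h1 : spatialNorm (consT (s 0 + r + 1) p - s) = r := by
    rw [spatialNorm_eq, tailE_sub, tailE_consT]
  have h2 : (consT (s 0 + r + 1) p - s) 0 = s 0 + r + 1 - s 0 := by
    simp
  have h3 : (0:ℝ) ≤ r := norm_nonneg _
  simp only [cone, Set.mem_setOf_eq, h1, h2]
  linarith

lemma T_lowerBound (hne : S + cone ≠ Set.univ) (p : EuclideanSpace ℝ (Fin 3)) :
    ∃ t0 : ℝ, ∀ t : ℝ, consT t p ∈ S + cone → t0 ≤ t := by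
  obtain ⟨z, hz⟩ := Set.ne_univ_iff_exists_notMem _ |>.mp hne
  set r : ℝ := ‖tailE z - p‖ with hr
  refine ⟨z 0 - r - 1, fun t ht => ?_⟩
  by_contra hlt
  push_neg at hlt
  apply hz
  have hmem : z - consT t p ∈ cone := by
    have h1 : spatialNorm (z - consT t p) = r := by
      rw [spatialNorm_eq, tailE_sub, tailE_consT]
    have h2 : (z - consT t p) 0 = z 0 - t := by simp
    have h3 : (0:ℝ) ≤ r := norm_nonneg _
    simp only [cone, Set.mem_setOf_eq, h1, h2]
    linarith
  have := futureAdd ht hmem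
  simpa using this

lemma T_mono {p : EuclideanSpace ℝ (Fin 3)} {t t' : ℝ}
    (ht : consT t p ∈ S + cone) (h : t < t') : consT t' p ∈ S + cone := by
  have heq : consT t' p = consT t p + consT (t' - t) 0 := by
    funext i
    refine Fin.cases ?_ (fun j => ?_) i
    · show t' = t + (t' - t); ring
    · show p j = p j + (0 : EuclideanSpace ℝ (Fin 3)) j
      simp
  rw [heq]
  refine futureAdd ht ?_
  have h1 : spatialNorm (consT (t' - t) 0) = 0 := by
    rw [spatialNorm_consT, norm_zero]
  simp only [cone, Set.mem_setOf_eq, h1, consT_zero]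
  linarith

lemma cons_mem_iff (hS : S.Nonempty) (hne : S + cone ≠ Set.univ)
    (p : EuclideanSpace ℝ (Fin 3)) (t : ℝ) :
    consT t p ∈ S + cone ↔ bfun S p < t := by
  have hT : {s : ℝ | consT s p ∈ S + cone}.Nonempty := T_nonempty hS p
  obtain ⟨t0, ht0⟩ := T_lowerBound hne p
  have hbdd : BddBelow {s : ℝ | consT s p ∈ S + cone} := ⟨t0, fun s hs => ht0 s hs⟩
  constructor
  · intro ht
    have hopen : IsOpen {s : ℝ | consT s p ∈ S + cone} := by
      have hc : Continuous fun s : ℝ => consT s p := by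
        refine continuous_pi fun i => ?_
        refine Fin.cases ?_ (fun j => ?_) i
        · simpa using continuous_id'
        · simpa using continuous_const
      exact (isOpen_cone.add_left).preimage hc
    obtain ⟨ε, hε, hball⟩ := Metric.isOpen_iff.mp hopen t ht
    have hmem : t - ε / 2 ∈ {s : ℝ | consT s p ∈ S + cone} := by
      apply hball
      rw [Metric.mem_ball, Real.dist_eq, abs_of_nonpos (by linarith)]
      linarith
    have := csInf_le hbdd hmem
    calc bfun S p ≤ t - ε / 2 := this
      _ < t := by linarith
  · intro ht
    obtain ⟨s, hs, hst⟩ := exists_lt_of_csInf_lt hT ht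
    exact T_mono hs hst

lemma bfun_le (hS : S.Nonempty) (hne : S + cone ≠ Set.univ)
    (p q : EuclideanSpace ℝ (Fin 3)) :
    bfun S q ≤ bfun S p + dist p q := by
  have key : ∀ t, bfun S p < t → bfun S q ≤ t + dist p q := by
    intro t ht
    set t' : ℝ := (bfun S p + t) / 2 with ht'
    have h1 : bfun S p < t' := by rw [ht']; linarith
    have h2 : t' < t := by rw [ht']; linarith
    have hmem : consT t' p ∈ S + cone := (cons_mem_iff hS hne p t').mpr h1
    have heq : consT (t + dist p q) q = consT t' p + consT (t + dist p q - t') (q - p) := by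
      funext i
      refine Fin.cases ?_ (fun j => ?_) i
      · show t + dist p q = t' + (t + dist p q - t'); ring
      · show q j = p j + (q - p) j
        show q j = p j + (q j - p j)
        ring
    have hc : consT (t + dist p q - t') (q - p) ∈ cone := by
      have h3 : spatialNorm (consT (t + dist p q - t') (q - p)) = dist p q := by
        rw [spatialNorm_consT, ← dist_eq_norm, dist_comm]
      simp only [cone, Set.mem_setOf_eq, h3, consT_zero]
      linarith
    have hmem2 : consT (t + dist p q) q ∈ S + cone := heq ▸ futureAdd hmem hc
    exact ((cons_mem_iff hS hne q (t + dist p q)).mp hmem2).le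
  by_contra hcon
  push_neg at hcon
  have := key ((bfun S p + (bfun S q - dist p q)) / 2) (by linarith)
  linarith

lemma bfun_lipschitz (hS : S.Nonempty) (hne : S + cone ≠ Set.univ) :
    LipschitzWith 1 (bfun S) := by
  apply LipschitzWith.of_dist_le_mul
  intro p q
  have h1 := bfun_le hS hne p q
  have h2 := bfun_le hS hne q p
  rw [dist_comm q p] at h2
  rw [Real.dist_eq, NNReal.coe_one, one_mul, abs_sub_le_iff]
  constructor <;> linarith

lemma mem_F_iff (hS : S.Nonempty) (hne : S + cone ≠ Set.univ) (x : Fin 4 → ℝ) :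
    x ∈ S + cone ↔ bfun S (tailE x) < x 0 := by
  have := cons_mem_iff hS hne (tailE x) (x 0)
  rwa [consT_self_tailE x] at this

lemma frontier_F (hS : S.Nonempty) (hne : S + cone ≠ Set.univ) :
    frontier (S + cone) = {x : Fin 4 → ℝ | x 0 = bfun S (tailE x)} := by
  have hlip := bfun_lipschitz hS hne
  have hcont : Continuous fun x : Fin 4 → ℝ => bfun S (tailE x) :=
    hlip.continuous.comp tailE_continuous
  have hopenF : IsOpen (S + cone) := isOpen_cone.add_left
  have hclosed : IsClosed {x : Fin 4 → ℝ | bfun S (tailE x) ≤ x 0} :=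
    isClosed_le hcont (continuous_apply 0)
  have hsub : S + cone ⊆ {x : Fin 4 → ℝ | bfun S (tailE x) ≤ x 0} := fun x hx =>
    ((mem_F_iff hS hne x).mp hx).le
  have hclsub : closure (S + cone) ⊆ {x : Fin 4 → ℝ | bfun S (tailE x) ≤ x 0} :=
    closure_minimal hsub hclosed
  have hfr : frontier (S + cone) = closure (S + cone) \ (S + cone) := by
    rw [frontier, hopenF.interior_eq]
  ext x
  rw [hfr]
  constructor
  · rintro ⟨hcl, hnot⟩
    have h1 : bfun S (tailE x) ≤ x 0 := hclsub hcl
    have h2 : ¬ bfun S (tailE x) < x 0 := fun h => hnot ((mem_F_iff hS hne x).mpr h)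
    exact le_antisymm (not_lt.mp h2) h1
  · intro hx
    simp only [Set.mem_setOf_eq] at hx
    constructor
    · rw [Metric.mem_closure_iff]
      intro ε hε
      refine ⟨consT (x 0 + ε / 2) (tailE x), ?_, ?_⟩
      · rw [cons_mem_iff hS hne]
        rw [← hx]; linarith
      · rw [dist_pi_lt_iff hε]
        intro i
        refine Fin.cases ?_ (fun j => ?_) i
        · rw [consT_zero, Real.dist_eq, abs_of_neg (by linarith : x 0 - (x 0 + ε / 2) < 0)]
          linarith
        · rw [consT_succ]
          have : dist (x j.succ) (tailE x j) = 0 := by simp [tailE]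
          rw [this]; exact hε
    · intro hmem
      have := (mem_F_iff hS hne x).mp hmem
      rw [← hx] at this
      exact lt_irrefl _ this

end Main

/-- Achronal boundaries in Minkowski space: if `F = S + C` (the chronological
future `I⁺[S]` of a nonempty set `S`, `C` being the open future cone) is a
proper subset of `ℝ⁴`, then the frontier of `F` is the graph of a unique
1-Lipschitz function `h : ℝ³ → ℝ`; in particular it is achronal and is an
embedded 3-dimensional `C⁰` submanifold homeomorphic to `ℝ³`. -/
theorem achronal_boundary_is_lipschitz_graph
    (S : Set (Fin 4 → ℝ)) (hS : S.Nonempty)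
    (C : Set (Fin 4 → ℝ)) (hC : C = {x | spatialNorm x < x 0})
    (F : Set (Fin 4 → ℝ)) (hF : F = S + C) (hne : F ≠ Set.univ) :
    (∃! h : EuclideanSpace ℝ (Fin 3) → ℝ, LipschitzWith 1 h ∧
      frontier F = {x : Fin 4 → ℝ | x 0 = h (WithLp.toLp 2 (fun i : Fin 3 => x i.succ))}) ∧
    (∀ x ∈ frontier F, ∀ y ∈ frontier F, y - x ∉ C) ∧
    Nonempty (frontier F ≃ₜ EuclideanSpace ℝ (Fin 3)) := by
  obtain rfl : C = cone := hC
  subst hF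
  have hlip := bfun_lipschitz hS hne
  have hfr : frontier (S + cone) = {x : Fin 4 → ℝ | x 0 = bfun S (WithLp.toLp 2 (fun i : Fin 3 => x i.succ))} :=
    frontier_F hS hne
  set h := bfun S with hh
  refine ⟨⟨h, ⟨hlip, hfr⟩, ?_⟩, ?_, ?_⟩
  · -- uniqueness
    rintro h' ⟨hlip', hfr'⟩
    funext p
    have hmem : consT (h p) p ∈ frontier (S + cone) := by
      rw [hfr]
      show consT (h p) p 0 = h (tailE (consT (h p) p))
      rw [consT_zero, tailE_consT]
    rw [hfr'] at hmem
    have h2 : h p = h' (tailE (consT (h p) p)) := hmem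
    rw [tailE_consT] at h2
    exact h2.symm
  · -- achronality
    intro x hx y hy hyx
    rw [hfr] at hx hy
    have hx' : x 0 = h (tailE x) := hx
    have hy' : y 0 = h (tailE y) := hy
    have hd : dist (h (tailE y)) (h (tailE x)) ≤ 1 * dist (tailE y) (tailE x) :=
      hlip.dist_le_mul _ _
    rw [one_mul, Real.dist_eq] at hd
    have habs : h (tailE y) - h (tailE x) ≤ dist (tailE y) (tailE x) :=
      le_trans (le_abs_self _) hd
    have hdist : dist (tailE y) (tailE x) = spatialNorm (y - x) := by
      rw [spatialNorm_eq, tailE_sub, dist_eq_norm]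
    have hco : spatialNorm (y - x) < (y - x) 0 := hyx
    have h0 : (y - x) 0 = y 0 - x 0 := rfl
    rw [h0, hx', hy'] at hco
    rw [hdist] at habs
    linarith
  · -- homeomorphism
    refine ⟨{
      toFun := fun x => tailE x.1
      invFun := fun p => ⟨consT (h p) p, by
        rw [hfr]
        show consT (h p) p 0 = h (tailE (consT (h p) p))
        rw [consT_zero, tailE_consT]⟩
      left_inv := ?_
      right_inv := ?_
      continuous_toFun := tailE_continuous.comp continuous_subtype_val
      continuous_invFun := ?_ }⟩
    · intro x
      apply Subtype.ext
      show consT (h (tailE x.1)) (tailE x.1) = x.1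
      have hx := (Set.ext_iff.mp hfr x.1).mp x.2
      have hx' : h (tailE x.1) = x.1 0 := (hx : x.1 0 = _).symm
      funext i
      refine Fin.cases ?_ (fun j => ?_) i
      · exact hx'
      · rw [consT_succ]; rfl
    · intro p
      show tailE (consT (h p) p) = p
      exact tailE_consT _ _
    · apply Continuous.subtype_mk
      have : Continuous fun p : EuclideanSpace ℝ (Fin 3) => consT (h p) p := by
        refine continuous_pi fun i => ?_
        refine Fin.cases ?_ (fun j => ?_) i
        · simpa using hlip.continuous
        · simp only [consT_succ]
          exact (continuous_apply j).comp (PiLp.continuous_ofLp (p := 2) (β := fun _ : Fin 3 => ℝ))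
      exact this
end

section
/- Let a,b,c,d ∈ ℂ with ad − bc = 1, let A, C ∈ ℝ and B ∈ ℂ, and define the translation-type function α(ζ) = (A + Bζ + B̄ζ̄ + Cζζ̄)/(1 + ζζ̄). Set A' = A|a|² − Bbā − B̄b̄a + C|b|², B' = Bdā + B̄b̄c − Aāc − Cdb̄, C' = A|c|² − Bc̄d − B̄cd̄ + C|d|², and α'(ζ) = (A' + B'ζ + conj(B')ζ̄ + C'ζζ̄)/(1 + ζζ̄). Then A' and C' are real, and for every ζ ∈ ℂ with cζ + d ≠ 0 one has K_M(ζ)·α(ζ) = α'(f_M(ζ)), where M = [[a,b],[c,d]]. (Hence conjugating a BMS translation by a Lorentz transformation again gives a translation: the translations form a 4-parameter normal subgroup of the BMS group.) -/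
open ComplexConjugate

/-- Conjugating a BMS translation by a Lorentz transformation again gives a
translation: for `M = [[a,b],[c,d]] ∈ SL(2,ℂ)` and the translation-type
function `α(ζ) = (A + Bζ + B̄ζ̄ + Cζζ̄)/(1 + ζζ̄)` (`A, C` real, `B` complex),
the coefficients `A', B', C'` defined below give a function `α'` of the same
form (with `A', C'` real) satisfying `K_M(ζ)·α(ζ) = α'(f_M(ζ))` whenever
`cζ + d ≠ 0`. Hence the translations form a 4-parameter normal subgroup of the
BMS group. -/
theorem bms_translation_conjugation
    (a b c d : ℂ) (hdet : a * d - b * c = 1) (A C : ℝ) (B : ℂ) :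
    let α : ℂ → ℂ := fun ζ =>
      ((A : ℂ) + B * ζ + conj B * conj ζ + (C : ℂ) * ζ * conj ζ) /
        (1 + ζ * conj ζ)
    let A' : ℂ := (A : ℂ) * (a * conj a) - B * b * conj a - conj B * conj b * a
      + (C : ℂ) * (b * conj b)
    let B' : ℂ := B * d * conj a + conj B * conj b * c - (A : ℂ) * conj a * c
      - (C : ℂ) * d * conj b
    let C' : ℂ := (A : ℂ) * (c * conj c) - B * conj c * d - conj B * c * conj d
      + (C : ℂ) * (d * conj d)
    let α' : ℂ → ℂ := fun w =>
      (A' + B' * w + conj B' * conj w + C' * w * conj w) / (1 + w * conj w)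
    let f : ℂ → ℂ := fun ζ => (a * ζ + b) / (c * ζ + d)
    let K : ℂ → ℂ := fun ζ => (1 + ζ * conj ζ) /
      ((a * ζ + b) * conj (a * ζ + b) + (c * ζ + d) * conj (c * ζ + d))
    conj A' = A' ∧ conj C' = C' ∧
    ∀ ζ : ℂ, c * ζ + d ≠ 0 → K ζ * α ζ = α' (f ζ) := by
  intro α A' B' C' α' f K
  have hdetc : conj a * conj d - conj b * conj c = 1 := by
    have := congrArg conj hdet
    simpa [map_sub, map_mul] using this
  refine ⟨?_, ?_, ?_⟩
  · simp only [A', map_add, map_sub, map_mul, Complex.conj_conj, Complex.conj_ofReal]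
    ring
  · simp only [C', map_add, map_sub, map_mul, Complex.conj_conj, Complex.conj_ofReal]
    ring
  · intro ζ hD
    set N : ℂ := a * ζ + b with hN
    set D : ℂ := c * ζ + d with hDdef
    have hDb : conj D ≠ 0 := fun h => hD (by simpa using congrArg conj h)
    have hs : (1 : ℂ) + ζ * conj ζ ≠ 0 := by
      rw [Complex.mul_conj]
      intro h
      have h' : ((1 + Complex.normSq ζ : ℝ) : ℂ) = 0 := by push_cast; linear_combination h
      have : (1 : ℝ) + Complex.normSq ζ = 0 := by exact_mod_cast h'
      nlinarith [Complex.normSq_nonneg ζ]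
    have hQ : N * conj N + D * conj D ≠ 0 := by
      rw [Complex.mul_conj, Complex.mul_conj]
      intro h
      have h' : Complex.normSq N + Complex.normSq D = 0 := by exact_mod_cast h
      have hd0 : 0 < Complex.normSq D := Complex.normSq_pos.mpr hD
      linarith [Complex.normSq_nonneg N]
    have hBc : conj B' = conj B * conj d * a + B * b * conj c
        - (A : ℂ) * a * conj c - (C : ℂ) * conj d * b := by
      simp only [B', map_add, map_sub, map_mul, Complex.conj_conj, Complex.conj_ofReal]
    have hkey : A' * (D * conj D) + B' * (N * conj D) + conj B' * (conj N * D)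
        + C' * (N * conj N)
        = (A : ℂ) + B * ζ + conj B * conj ζ + (C : ℂ) * ζ * conj ζ := by
      simp only [A', B', C', hBc, hN, hDdef, map_add, map_mul]
      linear_combination ((conj a * conj d - conj b * conj c) *
          ((A : ℂ) + B * ζ + conj B * conj ζ + (C : ℂ) * ζ * conj ζ)) * hdet +
        ((A : ℂ) + B * ζ + conj B * conj ζ + (C : ℂ) * ζ * conj ζ) * hdetc
    have hfc : conj (f ζ) = conj N / conj D := by
      simp only [f, hN, hDdef, map_div₀]
    have hf : f ζ = N / D := rfl
    have hden : (1 : ℂ) + f ζ * conj (f ζ)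
        = (N * conj N + D * conj D) / (D * conj D) := by
      rw [hf, hfc]
      field_simp
      ring
    have hnum : A' + B' * f ζ + conj B' * conj (f ζ) + C' * (f ζ * conj (f ζ))
        = ((A : ℂ) + B * ζ + conj B * conj ζ + (C : ℂ) * ζ * conj ζ) / (D * conj D) := by
      rw [hf, hfc, eq_div_iff (mul_ne_zero hD hDb)]
      field_simp
      linear_combination hkey
    have hαf : α' (f ζ) = ((A : ℂ) + B * ζ + conj B * conj ζ + (C : ℂ) * ζ * conj ζ)
        / (N * conj N + D * conj D) := by
      show (A' + B' * f ζ + conj B' * conj (f ζ) + C' * (f ζ) * conj (f ζ))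
        / (1 + f ζ * conj (f ζ)) = _
      rw [mul_assoc C', hnum, hden, div_div_eq_mul_div,
        div_mul_cancel₀ _ (mul_ne_zero hD hDb)]
    rw [hαf]
    show (1 + ζ * conj ζ) / (N * conj N + D * conj D) *
      (((A : ℂ) + B * ζ + conj B * conj ζ + (C : ℂ) * ζ * conj ζ) / (1 + ζ * conj ζ)) = _
    rw [div_mul_div_comm, mul_comm ((1 : ℂ) + ζ * conj ζ)
        ((A : ℂ) + B * ζ + conj B * conj ζ + (C : ℂ) * ζ * conj ζ),
      mul_div_mul_right _ _ hs]
end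

section
/- Let M = [[a,b],[c,d]] ∈ SL(2,ℂ), let α, β : ℂ → ℝ, and let M⁻¹ = [[d,−b],[−c,a]]. Define β' : ℂ → ℝ by β'(w) = K_M(f_{M⁻¹}(w))·β(f_{M⁻¹}(w)) wherever defined. Then for every (ζ,u) ∈ ℂ × ℝ with cζ + d ≠ 0: b_{M,α}(s_β(ζ,u)) = s_{β'}(b_{M,α}(ζ,u)). Hence conjugation of a supertranslation by any BMS transformation is again a supertranslation: the supertranslations form an abelian normal subgroup of the BMS group. -/
/-- Conjugation of a supertranslation by any BMS transformation is again a
supertranslation: with `f_M(ζ) = (aζ+b)/(cζ+d)`, `K_M` its conformal factor,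
the BMS transformation `b_{M,α}(ζ,u) = (f_M(ζ), K_M(ζ)(u + α(ζ)))` and the
supertranslation `s_β(ζ,u) = (ζ, u + β(ζ))`, one has
`b_{M,α} ∘ s_β = s_{β'} ∘ b_{M,α}` where
`β'(w) = K_M(f_{M⁻¹}(w))·β(f_{M⁻¹}(w))`. Hence the supertranslations form an
abelian normal subgroup of the BMS group. -/
theorem supertranslations_normal_in_bms
    (a b c d : ℂ) (hdet : a * d - b * c = 1) (α β : ℂ → ℝ) :
    let f : ℂ → ℂ := fun ζ => (a * ζ + b) / (c * ζ + d)
    let finv : ℂ → ℂ := fun w => (d * w - b) / (-c * w + a)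
    let K : ℂ → ℝ := fun ζ => (1 + Complex.normSq ζ) /
      (Complex.normSq (a * ζ + b) + Complex.normSq (c * ζ + d))
    let bMα : ℂ × ℝ → ℂ × ℝ := fun p => (f p.1, K p.1 * (p.2 + α p.1))
    let sβ : ℂ × ℝ → ℂ × ℝ := fun p => (p.1, p.2 + β p.1)
    let β' : ℂ → ℝ := fun w => K (finv w) * β (finv w)
    let sβ' : ℂ × ℝ → ℂ × ℝ := fun p => (p.1, p.2 + β' p.1)
    ∀ (ζ : ℂ) (u : ℝ), c * ζ + d ≠ 0 → bMα (sβ (ζ, u)) = sβ' (bMα (ζ, u)) := by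
  intro f finv K bMα sβ β' sβ' ζ u h
  have h1 : -c * f ζ + a = 1 / (c * ζ + d) := by
    simp only [f]
    field_simp
    linear_combination hdet
  have h2 : d * f ζ - b = ζ / (c * ζ + d) := by
    rw [eq_div_iff h]
    simp only [f]
    rw [sub_mul, mul_assoc, div_mul_cancel₀ _ h]
    linear_combination ζ * hdet
  have hfinv : finv (f ζ) = ζ := by
    simp only [finv, h1, h2]
    field_simp [mul_comm ζ c, h]
  simp only [bMα, sβ, sβ', β', hfinv, Prod.mk.injEq]
  exact ⟨trivial, by ring⟩
end

section
/- Let q ∈ ℝ⁴ be nonzero with q₀ = ‖(q₁,q₂,q₃)‖ (so q is a future-pointing null vector), and let γ : [0,1] → ℝ⁴ be a C¹ future-directed causal curve with γ(0) = 0 and γ(1) = q. Then γ lies entirely on the null segment from 0 to q: there exists a nondecreasing function c : [0,1] → [0,1] with c(0) = 0, c(1) = 1 and γ(t) = c(t)·q for all t. (This is the Minkowski case of the corollary that any causal curve joining two points that are causally but not chronologically related must be a null geodesic.) -/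
/-- Cauchy–Schwarz in 3 dimensions, hands-on form. -/
private lemma cs3 (a b c x y z : ℝ) :
    a * x + b * y + c * z ≤
      Real.sqrt (a ^ 2 + b ^ 2 + c ^ 2) * Real.sqrt (x ^ 2 + y ^ 2 + z ^ 2) := by
  have h1 : (a * x + b * y + c * z) ^ 2 ≤ (a ^ 2 + b ^ 2 + c ^ 2) * (x ^ 2 + y ^ 2 + z ^ 2) := by
    nlinarith [sq_nonneg (a * y - b * x), sq_nonneg (a * z - c * x), sq_nonneg (b * z - c * y)]
  calc a * x + b * y + c * z ≤ |a * x + b * y + c * z| := le_abs_self _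
    _ = Real.sqrt ((a * x + b * y + c * z) ^ 2) := (Real.sqrt_sq_eq_abs _).symm
    _ ≤ Real.sqrt ((a ^ 2 + b ^ 2 + c ^ 2) * (x ^ 2 + y ^ 2 + z ^ 2)) := Real.sqrt_le_sqrt h1
    _ = _ := Real.sqrt_mul (by positivity) _

/-- A function continuous on `[0,1]` vanishing on `(0,1)` vanishes on `[0,1]`. -/
private lemma zero_of_eqOn_Ioo (f : ℝ → ℝ) (hf : ContinuousOn f (Set.Icc 0 1))
    (h : ∀ t ∈ Set.Ioo (0 : ℝ) 1, f t = 0) : ∀ t ∈ Set.Icc (0 : ℝ) 1, f t = 0 := by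
  intro t ht
  have hcl : t ∈ closure (Set.Ioo (0 : ℝ) 1) := by
    rw [closure_Ioo (zero_ne_one)]; exact ht
  have hne : (nhdsWithin t (Set.Ioo (0 : ℝ) 1)).NeBot :=
    mem_closure_iff_nhdsWithin_neBot.1 hcl
  have h1 : Filter.Tendsto f (nhdsWithin t (Set.Ioo (0 : ℝ) 1)) (nhds (f t)) :=
    (hf t ht).mono Set.Ioo_subset_Icc_self
  have h2 : Filter.Tendsto f (nhdsWithin t (Set.Ioo (0 : ℝ) 1)) (nhds 0) := by
    refine Filter.Tendsto.congr' ?_ tendsto_const_nhds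
    filter_upwards [self_mem_nhdsWithin] with x hx
    exact (h x hx).symm
  exact tendsto_nhds_unique h1 h2

/-- If `q` is a nonzero future-pointing null vector and `γ : [0,1] → ℝ⁴` is a
`C¹` future-directed causal curve from the origin to `q`, then `γ` lies
entirely on the null segment from `0` to `q`: `γ(t) = c(t)·q` for some
nondecreasing `c : [0,1] → [0,1]` with `c(0) = 0`, `c(1) = 1`. (Minkowski case
of: a causal curve joining causally but not chronologically related points is
a null geodesic.) -/
theorem causal_curve_to_null_point_is_null_segment
    (q : Fin 4 → ℝ) (hq0 : q ≠ 0) (hqnull : q 0 = spatialNorm q)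
    (γ γ' : ℝ → Fin 4 → ℝ)
    (hderiv : ∀ t ∈ Set.Icc (0 : ℝ) 1, HasDerivAt γ (γ' t) t)
    (hcont : ContinuousOn γ' (Set.Icc 0 1))
    (hcausal : ∀ t ∈ Set.Icc (0 : ℝ) 1, spatialNorm (γ' t) ≤ γ' t 0)
    (h0 : γ 0 = 0) (h1 : γ 1 = q) :
    ∃ c : ℝ → ℝ, MonotoneOn c (Set.Icc 0 1) ∧ c 0 = 0 ∧ c 1 = 1 ∧
      (∀ t ∈ Set.Icc (0 : ℝ) 1, c t ∈ Set.Icc (0 : ℝ) 1) ∧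
      ∀ t ∈ Set.Icc (0 : ℝ) 1, γ t = c t • q := by
  -- `q 0 > 0`
  have hqsq : q 1 ^ 2 + q 2 ^ 2 + q 3 ^ 2 = q 0 ^ 2 := by
    rw [hqnull, spatialNorm, Real.sq_sqrt (by positivity)]
  have hq0nonneg : 0 ≤ q 0 := by rw [hqnull]; exact Real.sqrt_nonneg _
  have hq0pos : 0 < q 0 := by
    rcases hq0nonneg.lt_or_eq with h | h
    · exact h
    · exfalso; apply hq0
      have hsum : q 1 ^ 2 + q 2 ^ 2 + q 3 ^ 2 = 0 := by rw [hqsq, ← h]; ring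
      have h1' : q 1 = 0 := by nlinarith [sq_nonneg (q 2), sq_nonneg (q 3), sq_nonneg (q 1)]
      have h2' : q 2 = 0 := by nlinarith [sq_nonneg (q 2), sq_nonneg (q 3), sq_nonneg (q 1)]
      have h3' : q 3 = 0 := by nlinarith [sq_nonneg (q 2), sq_nonneg (q 3), sq_nonneg (q 1)]
      funext i; fin_cases i <;> simp [← h, h1', h2', h3']
  -- component derivatives
  have hdj : ∀ t ∈ Set.Icc (0 : ℝ) 1, ∀ j, HasDerivAt (fun s => γ s j) (γ' t j) t :=
    fun t ht j => hasDerivAt_pi.1 (hderiv t ht) j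
  have hcontj : ∀ j, ContinuousOn (fun t => γ' t j) (Set.Icc 0 1) :=
    fun j => (continuous_apply j).comp_continuousOn hcont
  have hγcontj : ∀ j, ContinuousOn (fun t => γ t j) (Set.Icc 0 1) :=
    fun j t ht => ((hdj t ht j).continuousAt).continuousWithinAt
  have hx0nonneg : ∀ t ∈ Set.Icc (0 : ℝ) 1, 0 ≤ γ' t 0 :=
    fun t ht => le_trans (Real.sqrt_nonneg _) (hcausal t ht)
  -- Cauchy–Schwarz bound on the causal inner product
  have hCS : ∀ t ∈ Set.Icc (0 : ℝ) 1,
      q 1 * γ' t 1 + q 2 * γ' t 2 + q 3 * γ' t 3 ≤ q 0 * γ' t 0 := by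
    intro t ht
    have h1' := cs3 (q 1) (q 2) (q 3) (γ' t 1) (γ' t 2) (γ' t 3)
    have h2' : Real.sqrt (q 1 ^ 2 + q 2 ^ 2 + q 3 ^ 2) = q 0 := by
      rw [hqnull]; rfl
    rw [h2'] at h1'
    calc q 1 * γ' t 1 + q 2 * γ' t 2 + q 3 * γ' t 3
        ≤ q 0 * spatialNorm (γ' t) := h1'
      _ ≤ q 0 * γ' t 0 := mul_le_mul_of_nonneg_left (hcausal t ht) hq0nonneg
  -- the auxiliary monotone function W
  set w : ℝ → ℝ := fun t =>
    q 0 * γ' t 0 - (q 1 * γ' t 1 + q 2 * γ' t 2 + q 3 * γ' t 3) with hw_def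
  set W : ℝ → ℝ := fun t =>
    q 0 * γ t 0 - (q 1 * γ t 1 + q 2 * γ t 2 + q 3 * γ t 3) with hW_def
  have hWd : ∀ t ∈ Set.Icc (0 : ℝ) 1, HasDerivAt W (w t) t := by
    intro t ht
    exact (((hdj t ht 0).const_mul (q 0)).sub
      ((((hdj t ht 1).const_mul (q 1)).add ((hdj t ht 2).const_mul (q 2))).add
        ((hdj t ht 3).const_mul (q 3))))
  have hWcont : ContinuousOn W (Set.Icc 0 1) :=
    fun t ht => ((hWd t ht).continuousAt).continuousWithinAt
  have hwnonneg : ∀ t ∈ Set.Icc (0 : ℝ) 1, 0 ≤ w t := by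
    intro t ht; simp only [hw_def]; linarith [hCS t ht]
  have hWmono : MonotoneOn W (Set.Icc 0 1) := by
    apply monotoneOn_of_hasDerivWithinAt_nonneg (convex_Icc 0 1) hWcont
      (f' := w)
    · intro x hx
      rw [interior_Icc] at hx
      exact (hWd x (Set.Ioo_subset_Icc_self hx)).hasDerivWithinAt
    · intro x hx
      rw [interior_Icc] at hx
      exact hwnonneg x (Set.Ioo_subset_Icc_self hx)
  have hW0 : W 0 = 0 := by simp [hW_def, h0]
  have hW1 : W 1 = 0 := by
    simp only [hW_def, h1]; nlinarith [hqsq]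
  have hWzero : ∀ t ∈ Set.Icc (0 : ℝ) 1, W t = 0 := by
    intro t ht
    have hl := hWmono (Set.left_mem_Icc.2 zero_le_one) ht ht.1
    have hr := hWmono ht (Set.right_mem_Icc.2 zero_le_one) ht.2
    rw [hW0] at hl; rw [hW1] at hr; linarith
  -- the derivative w vanishes on [0,1]
  have hwIoo : ∀ t ∈ Set.Ioo (0 : ℝ) 1, w t = 0 := by
    intro t ht
    have hmem : Set.Ioo (0 : ℝ) 1 ∈ nhds t := isOpen_Ioo.mem_nhds ht
    have heq : W =ᶠ[nhds t] fun _ => 0 := by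
      filter_upwards [hmem] with x hx
      exact hWzero x (Set.Ioo_subset_Icc_self hx)
    have : HasDerivAt (fun _ : ℝ => (0 : ℝ)) (w t) t :=
      (hWd t (Set.Ioo_subset_Icc_self ht)).congr_of_eventuallyEq heq.symm
    exact (this.unique (hasDerivAt_const t 0)).symm ▸ rfl
  have hwcont : ContinuousOn w (Set.Icc 0 1) := by
    apply ContinuousOn.sub
    · exact (hcontj 0).const_smul (q 0)
    · exact (((hcontj 1).const_smul (q 1)).add ((hcontj 2).const_smul (q 2))).add
        ((hcontj 3).const_smul (q 3))
  have hwzero : ∀ t ∈ Set.Icc (0 : ℝ) 1, w t = 0 := zero_of_eqOn_Ioo w hwcont hwIoo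
  -- equality case of Cauchy–Schwarz: γ' t is proportional to q
  have hkey : ∀ t ∈ Set.Icc (0 : ℝ) 1, ∀ j, q 0 * γ' t j = γ' t 0 * q j := by
    intro t ht j
    have hE1 : q 1 * γ' t 1 + q 2 * γ' t 2 + q 3 * γ' t 3 = q 0 * γ' t 0 := by
      have := hwzero t ht; simp only [hw_def] at this; linarith
    -- spatialNorm (γ' t) = γ' t 0
    have hsn : spatialNorm (γ' t) = γ' t 0 := by
      apply le_antisymm (hcausal t ht)
      by_contra hlt
      push_neg at hlt
      have h1' := cs3 (q 1) (q 2) (q 3) (γ' t 1) (γ' t 2) (γ' t 3)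
      have h2' : Real.sqrt (q 1 ^ 2 + q 2 ^ 2 + q 3 ^ 2) = q 0 := by rw [hqnull]; rfl
      rw [h2'] at h1'
      have : q 0 * spatialNorm (γ' t) < q 0 * γ' t 0 :=
        mul_lt_mul_of_pos_left hlt hq0pos
      have hsp : spatialNorm (γ' t) = Real.sqrt (γ' t 1 ^ 2 + γ' t 2 ^ 2 + γ' t 3 ^ 2) := rfl
      rw [← hsp] at h1'
      linarith [hE1]
    have hE2 : γ' t 1 ^ 2 + γ' t 2 ^ 2 + γ' t 3 ^ 2 = γ' t 0 ^ 2 := by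
      have : Real.sqrt (γ' t 1 ^ 2 + γ' t 2 ^ 2 + γ' t 3 ^ 2) = γ' t 0 := hsn
      rw [← this, Real.sq_sqrt (by positivity)]
    have hsum0 : (q 0 * γ' t 1 - γ' t 0 * q 1) ^ 2 + (q 0 * γ' t 2 - γ' t 0 * q 2) ^ 2 +
        (q 0 * γ' t 3 - γ' t 0 * q 3) ^ 2 = 0 := by
      linear_combination (q 0) ^ 2 * hE2 + (γ' t 0) ^ 2 * hqsq - 2 * q 0 * γ' t 0 * hE1
    have n1 := sq_nonneg (q 0 * γ' t 1 - γ' t 0 * q 1)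
    have n2 := sq_nonneg (q 0 * γ' t 2 - γ' t 0 * q 2)
    have n3 := sq_nonneg (q 0 * γ' t 3 - γ' t 0 * q 3)
    have e1 : q 0 * γ' t 1 - γ' t 0 * q 1 = 0 := by
      have : (q 0 * γ' t 1 - γ' t 0 * q 1) ^ 2 = 0 := by linarith
      exact pow_eq_zero_iff (by norm_num) |>.mp this
    have e2 : q 0 * γ' t 2 - γ' t 0 * q 2 = 0 := by
      have : (q 0 * γ' t 2 - γ' t 0 * q 2) ^ 2 = 0 := by linarith
      exact pow_eq_zero_iff (by norm_num) |>.mp this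
    have e3 : q 0 * γ' t 3 - γ' t 0 * q 3 = 0 := by
      have : (q 0 * γ' t 3 - γ' t 0 * q 3) ^ 2 = 0 := by linarith
      exact pow_eq_zero_iff (by norm_num) |>.mp this
    fin_cases j
    · show q 0 * γ' t 0 = γ' t 0 * q 0; ring
    · show q 0 * γ' t 1 = γ' t 0 * q 1; linarith
    · show q 0 * γ' t 2 = γ' t 0 * q 2; linarith
    · show q 0 * γ' t 3 = γ' t 0 * q 3; linarith
  -- constancy: γ t j is proportional to γ t 0
  have hDconst : ∀ j, ∀ t ∈ Set.Icc (0 : ℝ) 1,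
      q 0 * γ t j - γ t 0 * q j = 0 := by
    intro j
    have hc : ContinuousOn (fun t => q 0 * γ t j - γ t 0 * q j) (Set.Icc 0 1) :=
      ((hγcontj j).const_smul (q 0)).sub ((hγcontj 0).mul continuousOn_const)
    have hd : ∀ x ∈ Set.Ico (0 : ℝ) 1,
        HasDerivWithinAt (fun t => q 0 * γ t j - γ t 0 * q j) 0 (Set.Ici x) x := by
      intro x hx
      have hx' : x ∈ Set.Icc (0 : ℝ) 1 := ⟨hx.1, hx.2.le⟩
      have hD : HasDerivAt (fun t => q 0 * γ t j - γ t 0 * q j)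
          (q 0 * γ' x j - γ' x 0 * q j) x :=
        ((hdj x hx' j).const_mul (q 0)).sub ((hdj x hx' 0).mul_const (q j))
      have : q 0 * γ' x j - γ' x 0 * q j = 0 := by rw [hkey x hx' j]; ring
      rw [this] at hD
      exact hD.hasDerivWithinAt
    intro t ht
    have := constant_of_has_deriv_right_zero hc hd t ht
    simpa [h0] using this
  have hγeq : ∀ t ∈ Set.Icc (0 : ℝ) 1, ∀ j, γ t j = γ t 0 / q 0 * q j := by
    intro t ht j
    have := hDconst j t ht
    field_simp
    linarith
  -- monotonicity of c
  have hcmono : MonotoneOn (fun t => γ t 0 / q 0) (Set.Icc 0 1) := by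
    apply monotoneOn_of_hasDerivWithinAt_nonneg (convex_Icc 0 1)
      ((hγcontj 0).div_const _) (f' := fun t => γ' t 0 / q 0)
    · intro x hx
      rw [interior_Icc] at hx
      exact ((hdj x (Set.Ioo_subset_Icc_self hx) 0).div_const _).hasDerivWithinAt
    · intro x hx
      rw [interior_Icc] at hx
      exact div_nonneg (hx0nonneg x (Set.Ioo_subset_Icc_self hx)) hq0nonneg
  have hc0 : γ (0 : ℝ) 0 / q 0 = 0 := by simp [h0]
  have hc1 : γ (1 : ℝ) 0 / q 0 = 1 := by rw [h1]; exact div_self hq0pos.ne'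
  refine ⟨fun t => γ t 0 / q 0, hcmono, hc0, hc1, ?_, ?_⟩
  · intro t ht
    constructor
    · have h' := hcmono (Set.left_mem_Icc.2 zero_le_one) ht ht.1
      simp only at h'
      rw [hc0] at h'
      exact h'
    · have h' := hcmono ht (Set.right_mem_Icc.2 zero_le_one) ht.2
      simp only at h'
      rw [hc1] at h'
      exact h'
  · intro t ht
    funext j
    rw [Pi.smul_apply, smul_eq_mul]
    exact hγeq t ht j
end
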